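/- Let h_j ∈ 𝔽_q[t][u] be supported on K_j ⊆ ℤ⁺ for 1 ≤ j ≤ L, let K = K_1 ∪ … ∪ K_L, and suppose the K*-portion of (h_j)_{j=1}^L is linearly independent. Let β_1, …, β_L ∈ K_∞. Then there exist an L × L matrix 𝒯 with entries in 𝔽_q[t] and polynomials g_1, …, g_L ∈ 𝔽_q[t][u] such that: (1) each g_j is supported on a subset of K; (2) 𝒯 · (h_1（u）, …, h_L(u))ᵀ = (g_1(u), …, g_L(u))ᵀ; (3) there exist T_1, …, T_L ∈ K* with [g_i]_{T_j} = 0 whenever i ≠ j; (4) there exist γ_1, …, γ_L ∈ K_∞ with β_1 h_1(u) + … + β_L h_L(u) = γ_1 g_1(u) + … + γ_L g_L(u). -/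

import Mathlib

open Polynomial Classical
open Matrix

/-- Embedding of `F[t]` into `K_∞ = F((1/t))`, realized as Laurent series in `X = 1/t`
(so `t ↦ X⁻¹`, i.e. the single Hahn series with exponent `-1`). -/
noncomputable def tEmbed (F : Type*) [Field F] : Polynomial F →+* LaurentSeries F :=
  (Polynomial.aeval (HahnSeries.single (-1 : ℤ) (1 : F))).toRingHom

/-- `ord` of an element of `K_∞` (in terms of `t`): the largest `t`-exponent, `⊥` if zero. -/
noncomputable def ordinf {F : Type*} [Field F] (α : LaurentSeries F) : EReal :=
  if α = 0 then ⊥ else (((-α.order : ℤ) : ℝ) : EReal)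

/-- Fractional part `{α}`: the part with negative `t`-exponents (positive `X`-exponents). -/
noncomputable def fracPart {F : Type*} [Field F] (α : LaurentSeries F) : LaurentSeries F :=
  { coeff := fun i => if 1 ≤ i then α.coeff i else 0,
    isPWO_support' := α.isPWO_support'.mono (fun i hi => by
      by_cases h : (1:ℤ) ≤ i <;> simp only [Function.mem_support, h, if_true, if_false] at hi ⊢ <;>
        first | exact hi | exact absurd rfl hi) }

/-- `res α`: the coefficient of `t⁻¹` in `α`. -/
noncomputable def res {F : Type*} [Field F] (α : LaurentSeries F) : F := α.coeff 1

/-- A polynomial is supported on `K ⊆ ℤ⁺` if its nonconstant coefficients are nonzero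
exactly at the exponents in `K`. -/
def SupportedOn {R : Type*} [Semiring R] (h : Polynomial R) (K : Set ℕ) : Prop :=
  (∀ k ∈ K, 0 < k) ∧ ∀ r : ℕ, 0 < r → (h.coeff r ≠ 0 ↔ r ∈ K)

/-- The shadow `S(K)` of `K ⊆ ℤ⁺`: positive integers `j` with `j ≼_p r` for some `r ∈ K`. -/
def Shadow (p : ℕ) (K : Set ℕ) : Set ℕ :=
  {j | 0 < j ∧ ∃ r ∈ K, ¬ p ∣ Nat.choose r j}

/-- `K* = {k ∈ K : p ∤ k and pᵛk ∉ S(K) for all v ≥ 1}`. -/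
def Kstar (p : ℕ) (K : Set ℕ) : Set ℕ :=
  {k | k ∈ K ∧ ¬ p ∣ k ∧ ∀ v : ℕ, 0 < v → p ^ v * k ∉ Shadow p K}

/-- `k` is maximal in `K` with respect to the partial order `≼_p`. -/
def MaximalIn (p : ℕ) (K : Set ℕ) (k : ℕ) : Prop :=
  k ∈ K ∧ ∀ r ∈ K, ¬ p ∣ Nat.choose r k → r = k

/-- The part of a polynomial consisting of the monomials with exponents in `S`. -/
noncomputable def portion {R : Type*} [Semiring R] (h : Polynomial R) (S : Set ℕ) :
    Polynomial R :=
  ∑ r ∈ h.support, if r ∈ S then Polynomial.C (h.coeff r) * Polynomial.X ^ r else 0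

/-- The polynomial of degree `< N` with coefficient vector `c`. -/
noncomputable def polyOf {F : Type*} [Semiring F] (N : ℕ) (c : Fin N → F) : Polynomial F :=
  ∑ i : Fin N, Polynomial.C (c i) * Polynomial.X ^ (i : ℕ)

/-- `ord` of a polynomial in `F[t]`, i.e. its degree, with `⊥` for `0`. -/
noncomputable def pOrd {F : Type*} [Field F] (x : Polynomial F) : EReal :=
  if x = 0 then ⊥ else ((x.natDegree : ℝ) : EReal)

lemma algmap_single {F : Type*} [Field F] (a : F) :
    (algebraMap F (LaurentSeries F)) a = HahnSeries.single (0:ℤ) a := by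
  have h : (algebraMap F (LaurentSeries F)) a
      = (HahnSeries.ofPowerSeries ℤ F) (PowerSeries.C a) := rfl
  rw [h, HahnSeries.ofPowerSeries_C, HahnSeries.C_apply]

lemma tEmbed_coeff {F : Type*} [Field F] (p : Polynomial F) (n : ℕ) :
    (tEmbed F p).coeff (-(n:ℤ)) = p.coeff n := by
  induction p using Polynomial.induction_on' with
  | add p q hp hq => simp [map_add, HahnSeries.coeff_add, hp, hq]
  | monomial m a =>
    simp only [tEmbed, AlgHom.toRingHom_eq_coe, RingHom.coe_coe, Polynomial.aeval_monomial,
      HahnSeries.single_pow, one_pow, smul_neg, nsmul_eq_mul, mul_one, algmap_single,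
      HahnSeries.single_mul_single, zero_add, HahnSeries.coeff_single, Polynomial.coeff_monomial]
    have h2 : ((-(n:ℤ) = -(m:ℤ)) ↔ (n = m)) := by omega
    rw [h2]
    by_cases h : n = m <;> simp [h, Ne.symm, eq_comm]

lemma tEmbed_injective (F : Type*) [Field F] : Function.Injective (tEmbed F) := by
  intro p q hpq
  ext n
  have := congrArg (fun x => HahnSeries.coeff x (-(n:ℤ))) hpq
  simpa [tEmbed_coeff] using this

lemma exists_selection {𝕂 : Type*} [Field 𝕂] {L : ℕ} {ι : Type*} [Fintype ι]
    (v : Fin L → ι → 𝕂) (hv : LinearIndependent 𝕂 v) :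
    ∃ f : Fin L → ι, (Matrix.of fun i j => v i (f j)).det ≠ 0 := by
  classical
  set A : Matrix (Fin L) ι 𝕂 := Matrix.of v with hA
  have hrank : A.rank = L := by
    have := hv.rank_matrix (M := A)
    simpa using this
  have hcols : Module.finrank 𝕂 (Submodule.span 𝕂 (Set.range Aᵀ)) = L := by
    exact (Matrix.rank_eq_finrank_span_cols A).symm.trans hrank
  obtain ⟨s, hsub, hspan, hind⟩ := exists_linearIndependent 𝕂 (Set.range Aᵀ)
  have hfin : s.Finite := (Set.finite_range Aᵀ).subset hsub
  haveI := hfin.fintype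
  have hcard : s.toFinset.card = L := by
    rw [← finrank_span_set_eq_card hind, hspan, hcols]
  have hcard' : Fintype.card s = L := by rwa [Set.toFinset_card] at hcard
  let e : Fin L ≃ s := (Fintype.equivFinOfCardEq hcard').symm
  have hchoice : ∀ x : s, ∃ i : ι, Aᵀ i = (x : Fin L → 𝕂) := fun x => hsub x.2
  choose g hg using hchoice
  refine ⟨fun k => g (e k), ?_⟩
  have hB : (Matrix.of fun i j => v i (g (e j))) = Matrix.of (fun j i => ((e j : s) : Fin L → 𝕂) i)ᵀ := by
    ext i j
    have := congrFun (hg (e j)) i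
    exact (by simpa [Matrix.transpose_apply, hA] using this : v i (g (e j)) = ((e j : s) : Fin L → 𝕂) i)
  rw [hB]
  have hli2 : LinearIndependent 𝕂 (fun j : Fin L => ((e j : s) : Fin L → 𝕂)) :=
    hind.comp e e.injective
  have : IsUnit (Matrix.of (fun j i => ((e j : s) : Fin L → 𝕂) i))ᵀ := by
    rw [Matrix.isUnit_transpose]
    exact Matrix.linearIndependent_rows_iff_isUnit.mp hli2
  exact ((Matrix.isUnit_iff_isUnit_det _).mp this).ne_zero

lemma portion_coeff {R : Type*} [Semiring R] (h : Polynomial R) (S : Set ℕ) (n : ℕ) :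
    (portion h S).coeff n = if n ∈ S then h.coeff n else 0 := by
  classical
  unfold portion
  rw [Polynomial.finset_sum_coeff]
  by_cases hn : n ∈ h.support
  · rw [Finset.sum_eq_single_of_mem n hn]
    · by_cases hs : n ∈ S <;> simp [hs]
    · intro r _ hrn
      by_cases hs : r ∈ S <;>
        simp [hs, Polynomial.coeff_C_mul, Polynomial.coeff_X_pow, Ne.symm hrn]
  · have h0 : h.coeff n = 0 := Polynomial.notMem_support_iff.mp hn
    simp only [h0, ite_self]
    refine Finset.sum_eq_zero fun r hr => ?_
    have hrn : n ≠ r := fun e => hn (e ▸ hr)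
    by_cases hs : r ∈ S <;>
      simp [hs, Polynomial.coeff_C_mul, Polynomial.coeff_X_pow, hrn]

set_option maxHeartbeats 1000000 in
set_option synthInstance.maxHeartbeats 400000 in
/-- **Lemma (diagonalization with respect to the K*-portion).** -/
theorem stmt11 (p q : ℕ) [Fact p.Prime] (F : Type*) [Field F] [Fintype F] [CharP F p]
    (hcard : Fintype.card F = q)
    (L : ℕ) (Kfam : Fin L → Finset ℕ) (K : Finset ℕ)
    (h : Fin L → Polynomial (Polynomial F))
    (hsupp : ∀ j, SupportedOn (h j) ((Kfam j : Set ℕ)))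
    (hK : (⋃ j, (Kfam j : Set ℕ)) = (K : Set ℕ))
    (hli : LinearIndependent (RatFunc F) fun j : Fin L =>
      (portion (h j) (Kstar p (K : Set ℕ))).map (algebraMap (Polynomial F) (RatFunc F)))
    (β : Fin L → LaurentSeries F) :
    ∃ (T : Matrix (Fin L) (Fin L) (Polynomial F)) (g : Fin L → Polynomial (Polynomial F)),
      -- (1) each g_j is supported on a subset of K
      (∀ j : Fin L, ∀ r : ℕ, 0 < r → (g j).coeff r ≠ 0 → r ∈ (K : Set ℕ)) ∧
      -- (2) T ⬝ (h₁(u), …, h_L(u))ᵀ = (g₁(u), …, g_L(u))ᵀ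
      (∀ i : Fin L, ∑ j : Fin L, Polynomial.C (T i j) * h j = g i) ∧
      -- (3)
      (∃ Tj : Fin L → ℕ, (∀ j, Tj j ∈ Kstar p (K : Set ℕ)) ∧
        ∀ i j : Fin L, i ≠ j → (g i).coeff (Tj j) = 0) ∧
      -- (4)
      (∃ γ : Fin L → LaurentSeries F,
        ∑ j : Fin L, Polynomial.C (β j) * (h j).map (tEmbed F) =
          ∑ j : Fin L, Polynomial.C (γ j) * (g j).map (tEmbed F)) := by
  classical
  set Kst : Set ℕ := Kstar p (K : Set ℕ) with hKst
  set S : Finset ℕ := K.filter (fun k => k ∈ Kst) with hS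
  have hKstK : Kst ⊆ (K : Set ℕ) := fun k hk => hk.1
  have hmemS : ∀ k : ℕ, k ∈ S ↔ k ∈ Kst := by
    intro k
    simp only [hS, Finset.mem_filter]
    exact ⟨fun hx => hx.2, fun hx => ⟨hKstK hx, hx⟩⟩
  set A : Matrix (Fin L) {x // x ∈ S} (RatFunc F) :=
    Matrix.of (fun j k => algebraMap (Polynomial F) (RatFunc F) ((h j).coeff k)) with hA
  have hArows : LinearIndependent (RatFunc F) (fun j => A j) := by
    rw [Fintype.linearIndependent_iff]
    intro c hc
    refine Fintype.linearIndependent_iff.mp hli c ?_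
    ext n
    rw [Polynomial.finset_sum_coeff, Polynomial.coeff_zero]
    by_cases hn : n ∈ Kst
    · have hnS : n ∈ S := (hmemS n).mpr hn
      have hev := congrFun hc ⟨n, hnS⟩
      simp only [Finset.sum_apply, Pi.smul_apply, Pi.zero_apply, smul_eq_mul] at hev
      calc ∑ j, (c j • ((portion (h j) Kst).map (algebraMap (Polynomial F) (RatFunc F)))).coeff n
          = ∑ j, c j * A j ⟨n, hnS⟩ := by
            refine Finset.sum_congr rfl fun j _ => ?_
            rw [Polynomial.coeff_smul, Polynomial.coeff_map, portion_coeff, if_pos hn,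
              smul_eq_mul]
            rfl
        _ = 0 := hev
    · refine Finset.sum_eq_zero fun j _ => ?_
      rw [Polynomial.coeff_smul, Polynomial.coeff_map, portion_coeff, if_neg hn, map_zero,
        smul_zero]
  obtain ⟨f, hfdet⟩ := exists_selection (fun j => A j) hArows
  set Tj : Fin L → ℕ := fun k => ((f k : {x // x ∈ S}) : ℕ) with hTj
  have hTjK : ∀ k, Tj k ∈ Kst := fun k => (hmemS _).mp (f k).2
  set N : Matrix (Fin L) (Fin L) (Polynomial F) :=
    Matrix.of (fun i j => (h i).coeff (Tj j)) with hN
  have hNdet : N.det ≠ 0 := by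
    intro h0
    apply hfdet
    have heq : (Matrix.of fun i j => A i (f j))
        = (algebraMap (Polynomial F) (RatFunc F)).mapMatrix N := by
      ext i j; rfl
    rw [heq, ← RingHom.map_det, h0, map_zero]
  set T : Matrix (Fin L) (Fin L) (Polynomial F) := N.adjugate with hT
  set g : Fin L → Polynomial (Polynomial F) :=
    fun i => ∑ j, Polynomial.C (T i j) * h j with hg
  have hTN : T * N = N.det • (1 : Matrix (Fin L) (Fin L) (Polynomial F)) := Matrix.adjugate_mul N
  have hgcoeff : ∀ i k, (g i).coeff (Tj k) = if i = k then N.det else 0 := by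
    intro i k
    have h1 : (g i).coeff (Tj k) = ∑ j, T i j * (h j).coeff (Tj k) := by
      rw [hg, Polynomial.finset_sum_coeff]
      exact Finset.sum_congr rfl fun j _ => Polynomial.coeff_C_mul _
    have h2 : (T * N) i k = ∑ j, T i j * (h j).coeff (Tj k) := by
      rw [Matrix.mul_apply]; rfl
    rw [h1, ← h2, hTN, Matrix.smul_apply, Matrix.one_apply]
    by_cases hik : i = k <;> simp [hik]
  refine ⟨T, g, ?_, fun i => rfl, ?_, ?_⟩
  · intro j r hr hne
    have hex : ∃ k, (h k).coeff r ≠ 0 := by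
      by_contra hall
      push_neg at hall
      apply hne
      rw [hg, Polynomial.finset_sum_coeff]
      exact Finset.sum_eq_zero fun k _ => by
        rw [Polynomial.coeff_C_mul, hall k, mul_zero]
    obtain ⟨k, hk⟩ := hex
    have hrk : r ∈ (Kfam k : Set ℕ) := ((hsupp k).2 r hr).mp hk
    rw [← hK]
    exact Set.mem_iUnion.mpr ⟨k, hrk⟩
  · refine ⟨Tj, fun k => hTjK k, fun i j hij => ?_⟩
    rw [hgcoeff, if_neg hij]
  · set e := tEmbed F with he
    set M' : Matrix (Fin L) (Fin L) (LaurentSeries F) :=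
      Matrix.of (fun j i => e (T i j)) with hM'
    have hTdet : T.det ≠ 0 := by
      rw [hT, Matrix.det_adjugate]
      exact pow_ne_zero _ hNdet
    have hM'det : IsUnit M'.det := by
      have heq : M' = (tEmbed F).mapMatrix Tᵀ := by ext j i; rfl
      rw [heq, ← RingHom.map_det, Matrix.det_transpose, isUnit_iff_ne_zero]
      intro h0
      exact hTdet (tEmbed_injective F (by rw [h0, map_zero]))
    set γ : Fin L → LaurentSeries F := M'⁻¹ *ᵥ β with hγ
    have hMγ : M' *ᵥ γ = β := by
      rw [hγ, Matrix.mulVec_mulVec, Matrix.mul_nonsing_inv _ hM'det, Matrix.one_mulVec]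
    refine ⟨γ, ?_⟩
    have expand : ∀ i, (g i).map e = ∑ j, Polynomial.C (e (T i j)) * (h j).map e := by
      intro i
      rw [hg, Polynomial.map_sum]
      exact Finset.sum_congr rfl fun j _ => by rw [Polynomial.map_mul, Polynomial.map_C]
    calc ∑ j, Polynomial.C (β j) * (h j).map e
        = ∑ j, Polynomial.C ((M' *ᵥ γ) j) * (h j).map e := by rw [hMγ]
      _ = ∑ j, (∑ i, Polynomial.C (e (T i j) * γ i)) * (h j).map e := by
          refine Finset.sum_congr rfl fun j _ => ?_
          have hv : (M' *ᵥ γ) j = ∑ i, e (T i j) * γ i := by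
            rw [Matrix.mulVec, dotProduct]; rfl
          rw [hv, map_sum]
      _ = ∑ j, ∑ i, Polynomial.C (γ i) * (Polynomial.C (e (T i j)) * (h j).map e) := by
          refine Finset.sum_congr rfl fun j _ => ?_
          rw [Finset.sum_mul]
          refine Finset.sum_congr rfl fun i _ => ?_
          rw [_root_.map_mul, mul_comm (Polynomial.C (e (T i j))) (Polynomial.C (γ i)),
            mul_assoc]
      _ = ∑ i, ∑ j, Polynomial.C (γ i) * (Polynomial.C (e (T i j)) * (h j).map e) :=
          Finset.sum_comm
      _ = ∑ i, Polynomial.C (γ i) * (g i).map e := by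
          refine Finset.sum_congr rfl fun i _ => ?_
          rw [expand i, Finset.mul_sum]
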